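/- arXiv:1710.03500 — 3 statements merged into one kernel-verified Lean document; each statement's English description precedes it below -/
import Mathlib

section
/- Fix positive constants C_1, C_2, C_3, C_4, C_α, γ, η. For TOL > 0, let W*(TOL) denote the infimum of N·M·h^{−γ} over real N > 0, M > 0, h > 0 and κ ∈ (0,1) satisfying C_1/N + C_2/(N M) ≤ (κ·TOL/C_α)² and C_3·h^η + C_4/M ≤ (1−κ)·TOL. Then there exist constants 0 < c ≤ C and TOL_0 > 0, depending only on C_1, C_2, C_3, C_4, C_α, γ, η, such that for all 0 < TOL ≤ TOL_0: c·TOL^{−(3+γ/η)} ≤ W*(TOL) ≤ C·TOL^{−(3+γ/η)}; i.e., the minimal average work of the double-loop Monte Carlo estimator is of order TOL^{−(3+γ/η)}. -/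
private lemma rpow_split (TOL : ℝ) (hT : 0 < TOL) (a : ℝ) :
    TOL ^ (-(3 + a)) = (TOL ^ 2)⁻¹ * TOL⁻¹ * TOL ^ (-a) := by
  rw [neg_add, Real.rpow_add hT, Real.rpow_neg hT.le]
  have h3 : TOL ^ (3 : ℝ) = TOL ^ 2 * TOL := by
    rw [show (3 : ℝ) = ((3 : ℕ) : ℝ) by norm_num, Real.rpow_natCast]; ring
  rw [h3, mul_inv]

set_option maxHeartbeats 1000000 in
/-- Work complexity of the DLMC estimator: the minimal average work `W*(TOL)` of the
cost-minimization problem is of order `TOL^{−(3+γ/η)}` as `TOL → 0`. -/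
theorem dlmc_work_complexity
    (C1 C2 C3 C4 Cα γ η : ℝ)
    (hC1 : 0 < C1) (hC2 : 0 < C2) (hC3 : 0 < C3) (hC4 : 0 < C4)
    (hCα : 0 < Cα) (hγ : 0 < γ) (hη : 0 < η) :
    ∃ c C TOL0 : ℝ, 0 < c ∧ c ≤ C ∧ 0 < TOL0 ∧
      ∀ TOL : ℝ, 0 < TOL → TOL ≤ TOL0 →
        ∀ Wstar : ℝ,
          Wstar = sInf {w : ℝ | ∃ N M h κ : ℝ,
            0 < N ∧ 0 < M ∧ 0 < h ∧ 0 < κ ∧ κ < 1 ∧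
            C1 / N + C2 / (N * M) ≤ (κ * TOL / Cα) ^ 2 ∧
            C3 * h ^ η + C4 / M ≤ (1 - κ) * TOL ∧
            w = N * M * h ^ (-γ)} →
          c * TOL ^ (-(3 + γ / η)) ≤ Wstar ∧ Wstar ≤ C * TOL ^ (-(3 + γ / η)) := by
  set c0 : ℝ := C1 * Cα ^ 2 * C4 * C3 ^ (γ / η) with hc0
  set K : ℝ := 4 * Cα ^ 2 * (C1 + C2 / (4 * C4)) with hK
  set C' : ℝ := K * (4 * C4) * (4 * C3) ^ (γ / η) with hC'
  have hc0pos : 0 < c0 := by positivity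
  have hKpos : 0 < K := by positivity
  have hC'pos : 0 < C' := by positivity
  refine ⟨c0, max c0 C', 1, hc0pos, le_max_left _ _, one_pos, ?_⟩
  intro TOL hT hT1 Wstar hW
  have hE : 0 < TOL ^ (-(3 + γ / η)) := Real.rpow_pos_of_pos hT _
  -- the feasible set
  set S := {w : ℝ | ∃ N M h κ : ℝ,
      0 < N ∧ 0 < M ∧ 0 < h ∧ 0 < κ ∧ κ < 1 ∧
      C1 / N + C2 / (N * M) ≤ (κ * TOL / Cα) ^ 2 ∧
      C3 * h ^ η + C4 / M ≤ (1 - κ) * TOL ∧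
      w = N * M * h ^ (-γ)} with hS
  -- lower bound for every element of S
  have hlow : ∀ w ∈ S, c0 * TOL ^ (-(3 + γ / η)) ≤ w := by
    rintro w ⟨N, M, h, κ, hN, hM, hh, hκ0, hκ1, hcon1, hcon2, rfl⟩
    clear hW Wstar hS hE
    clear_value S
    clear S
    -- bound on N
    have hN1 : C1 * Cα ^ 2 / TOL ^ 2 ≤ N := by
      have h2 : C1 / N ≤ TOL ^ 2 / Cα ^ 2 := by
        have ha : C1 / N ≤ (κ * TOL / Cα) ^ 2 := by
          have : 0 ≤ C2 / (N * M) := by positivity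
          linarith
        have hb : (κ * TOL / Cα) ^ 2 ≤ TOL ^ 2 / Cα ^ 2 := by
          rw [div_pow]
          gcongr
          nlinarith
        linarith
      rw [div_le_div_iff₀ hN (by positivity)] at h2
      rw [div_le_iff₀ (by positivity)]
      nlinarith
    -- bound on M
    have hM1 : C4 / TOL ≤ M := by
      have hp : 0 < h ^ η := Real.rpow_pos_of_pos hh η
      have hr : (1 - κ) * TOL ≤ TOL := by nlinarith [mul_pos hκ0 hT]
      have h2 : C4 / M ≤ TOL := by nlinarith [mul_pos hC3 hp]
      rw [div_le_iff₀ hM] at h2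
      rw [div_le_iff₀ hT]
      linarith
    -- bound on h ^ (-γ)
    have hh1 : C3 ^ (γ / η) * TOL ^ (-(γ / η)) ≤ h ^ (-γ) := by
      have hhe : h ^ η ≤ TOL / C3 := by
        have hq : 0 < C4 / M := div_pos hC4 hM
        have hr : (1 - κ) * TOL ≤ TOL := by nlinarith [mul_pos hκ0 hT]
        have : C3 * h ^ η ≤ TOL := by linarith
        rw [le_div_iff₀ hC3]; linarith
      have hkey : h ^ (-γ) = (h ^ η) ^ (-(γ / η)) := by
        rw [← Real.rpow_mul hh.le]
        congr 1
        field_simp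
      rw [hkey]
      have h1 : (TOL / C3) ^ (-(γ / η)) ≤ (h ^ η) ^ (-(γ / η)) :=
        Real.rpow_le_rpow_of_nonpos (Real.rpow_pos_of_pos hh η) hhe
          (neg_nonpos.mpr (by positivity))
      refine le_trans (le_of_eq ?_) h1
      have hne1 := (Real.rpow_pos_of_pos hT (γ / η)).ne'
      have hne2 := (Real.rpow_pos_of_pos hC3 (γ / η)).ne'
      rw [Real.div_rpow hT.le hC3.le, Real.rpow_neg hT.le, Real.rpow_neg hC3.le]
      field_simp
    -- combine
    have hprod : (C1 * Cα ^ 2 / TOL ^ 2) * (C4 / TOL) * (C3 ^ (γ / η) * TOL ^ (-(γ / η)))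
        ≤ N * M * h ^ (-γ) := by
      have p1 : (0:ℝ) < C1 * Cα ^ 2 / TOL ^ 2 := by positivity
      have p2 : (0:ℝ) < C4 / TOL := by positivity
      have p3 : (0:ℝ) < C3 ^ (γ / η) * TOL ^ (-(γ / η)) := by positivity
      gcongr
    refine le_trans (le_of_eq ?_) hprod
    rw [rpow_split TOL hT]
    field_simp
    ring
  -- nonempty: explicit witness
  set h0 : ℝ := (TOL / (4 * C3)) ^ (η⁻¹) with hh0
  have hh0pos : 0 < h0 := Real.rpow_pos_of_pos (by positivity) _
  have hh0η : h0 ^ η = TOL / (4 * C3) := by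
    rw [hh0, ← Real.rpow_mul (by positivity), inv_mul_cancel₀ hη.ne', Real.rpow_one]
  set N0 : ℝ := K / TOL ^ 2 with hN0
  set M0 : ℝ := 4 * C4 / TOL with hM0
  have hN0pos : 0 < N0 := by positivity
  have hM0pos : 0 < M0 := by positivity
  have hmem : N0 * M0 * h0 ^ (-γ) ∈ S := by
    refine ⟨N0, M0, h0, 1/2, hN0pos, hM0pos, hh0pos, by norm_num, by norm_num, ?_, ?_, rfl⟩
    · -- statistical constraint
      have hKne : K ≠ 0 := hKpos.ne'
      have key : C1 / N0 + C2 / (N0 * M0)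
          = TOL ^ 2 / K * (C1 + C2 * TOL / (4 * C4)) := by
        rw [hN0, hM0]
        field_simp
      have key2 : ((1:ℝ)/2 * TOL / Cα) ^ 2 = TOL ^ 2 / K * (C1 + C2 / (4 * C4)) := by
        rw [hK]
        field_simp
        ring
      rw [key, key2]
      have hin : C2 * TOL / (4 * C4) ≤ C2 / (4 * C4) := by
        gcongr
        nlinarith
      apply mul_le_mul_of_nonneg_left (by linarith) (by positivity)
    · -- bias constraint
      rw [hh0η, hM0]
      have : C3 * (TOL / (4 * C3)) = TOL / 4 := by field_simp
      rw [this]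
      have : C4 / (4 * C4 / TOL) = TOL / 4 := by field_simp
      rw [this]
      norm_num
      linarith
  have hSne : S.Nonempty := ⟨_, hmem⟩
  have hbdd : BddBelow S := ⟨c0 * TOL ^ (-(3 + γ / η)), fun w hw => hlow w hw⟩
  constructor
  · rw [hW]
    exact le_csInf hSne hlow
  · rw [hW]
    refine le_trans (csInf_le hbdd hmem) ?_
    -- compute the work of the witness
    have hwit : N0 * M0 * h0 ^ (-γ) = C' * TOL ^ (-(3 + γ / η)) := by
      have hhg : h0 ^ (-γ) = (4 * C3) ^ (γ / η) * TOL ^ (-(γ / η)) := by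
        rw [hh0, ← Real.rpow_mul (by positivity)]
        have : η⁻¹ * -γ = -(γ / η) := by field_simp
        rw [this, Real.rpow_neg (by positivity), Real.div_rpow hT.le (by positivity),
          Real.rpow_neg hT.le]
        field_simp
      rw [hhg, hN0, hM0, hC', rpow_split TOL hT]
      field_simp
    rw [hwit]
    gcongr
    exact le_max_right _ _
end

section
/- Fix positive constants C_{la,1}, C_{la,2}, C_{la,3}, C_α, N_{jac}, γ, η and θ_0 ∈ (0,1). For TOL > 0 and a positive integer N_e, let W*(TOL, N_e) denote the infimum of N·N_{jac}·h^{−γ} over N > 0, h > 0, κ ∈ (0,1) satisfying C_{la,1}/N ≤ (κ·TOL/C_α)² and C_{la,2}/N_e + C_{la,3}·h^η ≤ (1−κ)·TOL. Then there exist constants 0 < c ≤ C and TOL_0 > 0 such that for all 0 < TOL ≤ TOL_0 and all N_e with C_{la,2}/N_e ≤ θ_0·TOL: c·TOL^{−(2+γ/η)} ≤ W*(TOL, N_e) ≤ C·TOL^{−(2+γ/η)}; i.e., the minimal average work of MCLA is of order TOL^{−(2+γ/η)}. -/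
open Real

set_option maxHeartbeats 1000000

/-- Work complexity of the MCLA estimator: uniformly over `N_e` with
`C_{la,2}/N_e ≤ θ₀·TOL` (Laplace bias a fixed fraction below the tolerance), the minimal
average work `W*(TOL, N_e)` is of order `TOL^{−(2+γ/η)}` as `TOL → 0`. -/
theorem mcla_work_complexity
    (Cla1 Cla2 Cla3 Cα Njac γ η θ0 : ℝ)
    (hC1 : 0 < Cla1) (hC2 : 0 < Cla2) (hC3 : 0 < Cla3) (hCα : 0 < Cα)
    (hNjac : 0 < Njac) (hγ : 0 < γ) (hη : 0 < η) (hθ0 : 0 < θ0) (hθ1 : θ0 < 1) :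
    ∃ c C TOL0 : ℝ, 0 < c ∧ c ≤ C ∧ 0 < TOL0 ∧
      ∀ TOL : ℝ, 0 < TOL → TOL ≤ TOL0 →
        ∀ Ne : ℕ, 0 < Ne → Cla2 / (Ne : ℝ) ≤ θ0 * TOL →
          ∀ Wstar : ℝ,
            Wstar = sInf {w : ℝ | ∃ N h κ : ℝ,
              0 < N ∧ 0 < h ∧ 0 < κ ∧ κ < 1 ∧
              Cla1 / N ≤ (κ * TOL / Cα) ^ 2 ∧
              Cla2 / (Ne : ℝ) + Cla3 * h ^ η ≤ (1 - κ) * TOL ∧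
              w = N * Njac * h ^ (-γ)} →
            c * TOL ^ (-(2 + γ / η)) ≤ Wstar ∧ Wstar ≤ C * TOL ^ (-(2 + γ / η)) := by
  have hθ' : 0 < 1 - θ0 := by linarith
  set κ0 : ℝ := (1 - θ0) / 2 with hκ0def
  have hκ0pos : 0 < κ0 := by positivity
  have hκ0lt : κ0 < 1 := by rw [hκ0def]; linarith
  set c0 : ℝ := Cla1 * Cα ^ 2 * Njac * Cla3 ^ (γ / η) with hc0def
  set C0 : ℝ := Cla1 * Cα ^ 2 * Njac / κ0 ^ 2 * ((1 - θ0) / (2 * Cla3)) ^ (-(γ / η))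
    with hC0def
  have hc0pos : 0 < c0 := by positivity
  have hC0pos : 0 < C0 := by positivity
  refine ⟨min c0 C0, max c0 C0, 1, lt_min hc0pos hC0pos,
    le_trans (min_le_left _ _) (le_max_left _ _), one_pos, ?_⟩
  intro TOL hT hT1 Ne hNe hbias Wstar hW
  have hηne : η ≠ 0 := ne_of_gt hη
  have hA : (0:ℝ) < TOL ^ (-(2 + γ / η)) := rpow_pos_of_pos hT _
  have hAsplit : TOL ^ (-(2 + γ / η)) = TOL ^ (-(2:ℝ)) * TOL ^ (-(γ / η)) := by
    rw [← rpow_add hT]; ring_nf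
  have hT2 : TOL ^ (-(2:ℝ)) = (TOL ^ 2)⁻¹ := by
    rw [rpow_neg hT.le, ← rpow_natCast TOL 2]; norm_num
  -- lower bound for every element of the set
  have hlow : ∀ w ∈ {w : ℝ | ∃ N h κ : ℝ,
      0 < N ∧ 0 < h ∧ 0 < κ ∧ κ < 1 ∧
      Cla1 / N ≤ (κ * TOL / Cα) ^ 2 ∧
      Cla2 / (Ne : ℝ) + Cla3 * h ^ η ≤ (1 - κ) * TOL ∧
      w = N * Njac * h ^ (-γ)}, c0 * TOL ^ (-(2 + γ / η)) ≤ w := by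
    rintro w ⟨N, h, κ, hN, hh, hκ, hκ1, hbal, hfeas, rfl⟩
    -- N lower bound
    have hNlb : Cla1 * Cα ^ 2 * TOL ^ (-(2:ℝ)) ≤ N := by
      have h2 : Cla1 / N ≤ TOL ^ 2 / Cα ^ 2 := by
        calc Cla1 / N ≤ (κ * TOL / Cα) ^ 2 := hbal
          _ ≤ (TOL / Cα) ^ 2 := by
              have h0 : 0 ≤ κ * TOL / Cα := le_of_lt (by positivity)
              have h1 : κ * TOL / Cα ≤ TOL / Cα := by gcongr; nlinarith
              exact pow_le_pow_left₀ h0 h1 2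
          _ = TOL ^ 2 / Cα ^ 2 := by ring
      rw [hT2]
      rw [div_le_div_iff₀ hN (by positivity)] at h2
      rw [mul_inv_le_iff₀ (by positivity)]
      nlinarith
    -- h lower bound
    have hhe : h ^ η ≤ TOL / Cla3 := by
      have hne0 : (0:ℝ) < Cla2 / Ne := by positivity
      have : Cla3 * h ^ η ≤ TOL := by nlinarith
      rw [le_div_iff₀ hC3]; linarith
    have hhη : (0:ℝ) < h ^ η := rpow_pos_of_pos hh η
    have hhlb : Cla3 ^ (γ / η) * TOL ^ (-(γ / η)) ≤ h ^ (-γ) := by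
      have e1 : h ^ (-γ) = (h ^ η) ^ (-(γ / η)) := by
        rw [← rpow_mul hh.le]; congr 1; field_simp
      have e2 : (TOL / Cla3) ^ (-(γ / η)) ≤ (h ^ η) ^ (-(γ / η)) :=
        rpow_le_rpow_of_nonpos hhη hhe (neg_nonpos.mpr (by positivity))
      have e3 : (TOL / Cla3) ^ (-(γ / η)) = Cla3 ^ (γ / η) * TOL ^ (-(γ / η)) := by
        rw [div_rpow hT.le hC3.le, rpow_neg hC3.le, div_eq_mul_inv, inv_inv, mul_comm]
      rw [e1, ← e3]; exact e2
    have key : c0 * TOL ^ (-(2 + γ / η)) =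
        (Cla1 * Cα ^ 2 * TOL ^ (-(2:ℝ))) * Njac * (Cla3 ^ (γ / η) * TOL ^ (-(γ / η))) := by
      rw [hAsplit, hc0def]; ring
    rw [key]
    have hx : (0:ℝ) ≤ Cla1 * Cα ^ 2 * TOL ^ (-(2:ℝ)) := by positivity
    have hy : (0:ℝ) ≤ Cla3 ^ (γ / η) * TOL ^ (-(γ / η)) := by positivity
    gcongr
  -- explicit feasible point
  set h0 : ℝ := ((1 - θ0) * TOL / (2 * Cla3)) ^ (1/η) with hh0def
  set N0 : ℝ := Cla1 * Cα ^ 2 / (κ0 * TOL) ^ 2 with hN0def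
  have hh0pos : 0 < h0 := rpow_pos_of_pos (by positivity) _
  have hN0pos : 0 < N0 := by positivity
  have hbase : (0:ℝ) < (1 - θ0) * TOL / (2 * Cla3) := by positivity
  have hh0η : h0 ^ η = (1 - θ0) * TOL / (2 * Cla3) := by
    rw [hh0def, ← rpow_mul hbase.le, one_div, inv_mul_cancel₀ hηne, rpow_one]
  have hmem : N0 * Njac * h0 ^ (-γ) ∈ {w : ℝ | ∃ N h κ : ℝ,
      0 < N ∧ 0 < h ∧ 0 < κ ∧ κ < 1 ∧
      Cla1 / N ≤ (κ * TOL / Cα) ^ 2 ∧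
      Cla2 / (Ne : ℝ) + Cla3 * h ^ η ≤ (1 - κ) * TOL ∧
      w = N * Njac * h ^ (-γ)} := by
    refine ⟨N0, h0, κ0, hN0pos, hh0pos, hκ0pos, hκ0lt, ?_, ?_, rfl⟩
    · rw [hN0def]
      have hx : Cla1 / (Cla1 * Cα ^ 2 / (κ0 * TOL) ^ 2) = (κ0 * TOL / Cα) ^ 2 := by
        rw [div_pow]
        field_simp
      exact hx.le
    · rw [hh0η]
      have : Cla3 * ((1 - θ0) * TOL / (2 * Cla3)) = (1 - θ0) * TOL / 2 := by
        field_simp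
      rw [this, hκ0def]
      linarith [hbias]
  have hval : N0 * Njac * h0 ^ (-γ) = C0 * TOL ^ (-(2 + γ / η)) := by
    have e1 : h0 ^ (-γ) = ((1 - θ0) / (2 * Cla3)) ^ (-(γ / η)) * TOL ^ (-(γ / η)) := by
      rw [hh0def, ← rpow_mul hbase.le]
      have : (1:ℝ)/η * (-γ) = -(γ / η) := by field_simp
      rw [this]
      have : (1 - θ0) * TOL / (2 * Cla3) = ((1 - θ0) / (2 * Cla3)) * TOL := by ring
      rw [this, mul_rpow (by positivity) hT.le]
    rw [e1, hAsplit, hT2, hN0def, hC0def]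
    field_simp
  have hne : Set.Nonempty {w : ℝ | ∃ N h κ : ℝ,
      0 < N ∧ 0 < h ∧ 0 < κ ∧ κ < 1 ∧
      Cla1 / N ≤ (κ * TOL / Cα) ^ 2 ∧
      Cla2 / (Ne : ℝ) + Cla3 * h ^ η ≤ (1 - κ) * TOL ∧
      w = N * Njac * h ^ (-γ)} := ⟨_, hmem⟩
  have hbdd : BddBelow {w : ℝ | ∃ N h κ : ℝ,
      0 < N ∧ 0 < h ∧ 0 < κ ∧ κ < 1 ∧
      Cla1 / N ≤ (κ * TOL / Cα) ^ 2 ∧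
      Cla2 / (Ne : ℝ) + Cla3 * h ^ η ≤ (1 - κ) * TOL ∧
      w = N * Njac * h ^ (-γ)} := ⟨_, hlow⟩
  subst hW
  constructor
  · calc min c0 C0 * TOL ^ (-(2 + γ / η)) ≤ c0 * TOL ^ (-(2 + γ / η)) := by gcongr; exact min_le_left _ _
      _ ≤ _ := le_csInf hne hlow
  · calc sInf _ ≤ N0 * Njac * h0 ^ (-γ) := csInf_le hbdd hmem
      _ = C0 * TOL ^ (-(2 + γ / η)) := hval
      _ ≤ max c0 C0 * TOL ^ (-(2 + γ / η)) := by gcongr; exact le_max_right _ _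
end

section
/- Fix positive constants c_1, c_2, N_{jac}, C_{dlis,1}, C_{dlis,2}, C_{dlis,3}, C_{dlis,4}, C_α, γ, η. For TOL > 0, let W*(TOL) denote the infimum of c_1·N·M·h^{−γ} + c_2·N·N_{jac}·h^{−γ} over real N > 0, M > 0, h > 0 and κ ∈ (0,1) satisfying C_{dlis,1}/N + C_{dlis,2}/(N M) ≤ (κ·TOL/C_α)² and C_{dlis,3}·h^η + C_{dlis,4}/M ≤ (1−κ)·TOL. Then there exist constants 0 < c ≤ C and TOL_0 > 0 such that for all 0 < TOL ≤ TOL_0: c·TOL^{−(3+γ/η)} ≤ W*(TOL) ≤ C·TOL^{−(3+γ/η)}; i.e., the double-loop Monte Carlo importance-sampling estimator has minimal average work of order TOL^{−(3+γ/η)}, the same order as DLMC. -/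
set_option maxHeartbeats 1600000


/-- Work complexity of the DLMCIS estimator: the minimal average work `W*(TOL)` of the
cost-minimization problem with work model `c₁·N·M·h^{−γ} + c₂·N·N_jac·h^{−γ}` is of order
`TOL^{−(3+γ/η)}` as `TOL → 0`, the same order as DLMC. -/
theorem dlmcis_work_complexity
    (c1 c2 Njac Cdlis1 Cdlis2 Cdlis3 Cdlis4 Cα γ η : ℝ)
    (hc1 : 0 < c1) (hc2 : 0 < c2) (hNjac : 0 < Njac)
    (hC1 : 0 < Cdlis1) (hC2 : 0 < Cdlis2) (hC3 : 0 < Cdlis3) (hC4 : 0 < Cdlis4)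
    (hCα : 0 < Cα) (hγ : 0 < γ) (hη : 0 < η) :
    ∃ c C TOL0 : ℝ, 0 < c ∧ c ≤ C ∧ 0 < TOL0 ∧
      ∀ TOL : ℝ, 0 < TOL → TOL ≤ TOL0 →
        ∀ Wstar : ℝ,
          Wstar = sInf {w : ℝ | ∃ N M h κ : ℝ,
            0 < N ∧ 0 < M ∧ 0 < h ∧ 0 < κ ∧ κ < 1 ∧
            Cdlis1 / N + Cdlis2 / (N * M) ≤ (κ * TOL / Cα) ^ 2 ∧
            Cdlis3 * h ^ η + Cdlis4 / M ≤ (1 - κ) * TOL ∧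
            w = c1 * N * M * h ^ (-γ) + c2 * N * Njac * h ^ (-γ)} →
          c * TOL ^ (-(3 + γ / η)) ≤ Wstar ∧ Wstar ≤ C * TOL ^ (-(3 + γ / η)) := by
  have hη' : η ≠ 0 := hη.ne'
  set q : ℝ := γ / η with hq
  have hqpos : 0 < q := div_pos hγ hη
  set clo : ℝ := c1 * Cdlis1 * Cα ^ 2 * Cdlis4 * Cdlis3 ^ q with hclo
  set Chi : ℝ := (c1 * (4 * Cdlis4) + c2 * Njac) *
      ((Cdlis1 + Cdlis2 / (4 * Cdlis4)) * (2 * Cα) ^ 2) * (4 * Cdlis3) ^ q with hChi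
  have hclopos : 0 < clo := by positivity
  have hChipos : 0 < Chi := by positivity
  refine ⟨clo, max clo Chi, 1, hclopos, le_max_left _ _, one_pos, ?_⟩
  intro TOL hT hT1 Wstar hW
  subst hW
  have hTq : (0:ℝ) < TOL ^ q := Real.rpow_pos_of_pos hT q
  have t3 : TOL ^ (-(3 + q)) = (TOL ^ (3:ℕ))⁻¹ * (TOL ^ q)⁻¹ := by
    rw [show -(3 + q) = (-3) + (-q) by ring, Real.rpow_add hT,
      Real.rpow_neg hT.le, Real.rpow_neg hT.le,
      show (3:ℝ) = ((3:ℕ):ℝ) by norm_num, Real.rpow_natCast]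
  -- the feasible point
  set M0 : ℝ := 4 * Cdlis4 / TOL with hM0def
  have hM0 : 0 < M0 := by positivity
  set h0 : ℝ := (TOL / (4 * Cdlis3)) ^ (1/η) with hh0def
  have hh0 : 0 < h0 := Real.rpow_pos_of_pos (by positivity) _
  set N0 : ℝ := (Cdlis1 + Cdlis2 / M0) * (2 * Cα / TOL) ^ 2 with hN0def
  have hN0 : 0 < N0 := by positivity
  have hh0η : h0 ^ η = TOL / (4 * Cdlis3) := by
    rw [hh0def, ← Real.rpow_mul (by positivity), one_div, inv_mul_cancel₀ hη',
      Real.rpow_one]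
  have hh0γ : h0 ^ (-γ) = (4 * Cdlis3) ^ q * (TOL ^ q)⁻¹ := by
    rw [hh0def, ← Real.rpow_mul (by positivity),
      show 1/η * (-γ) = -q by rw [hq]; ring,
      Real.rpow_neg (by positivity), Real.div_rpow hT.le (by positivity), inv_div,
      div_eq_mul_inv]
  have e1 : Cdlis1 / N0 + Cdlis2 / (N0 * M0) = (1/2 * TOL / Cα) ^ 2 := by
    rw [hN0def, hM0def]
    field_simp
  have e2 : Cdlis3 * h0 ^ η + Cdlis4 / M0 = (1 - 1/2) * TOL := by
    rw [hh0η, hM0def]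
    field_simp
    ring
  have hfeas : c1 * N0 * M0 * h0 ^ (-γ) + c2 * N0 * Njac * h0 ^ (-γ) ∈
      {w : ℝ | ∃ N M h κ : ℝ,
        0 < N ∧ 0 < M ∧ 0 < h ∧ 0 < κ ∧ κ < 1 ∧
        Cdlis1 / N + Cdlis2 / (N * M) ≤ (κ * TOL / Cα) ^ 2 ∧
        Cdlis3 * h ^ η + Cdlis4 / M ≤ (1 - κ) * TOL ∧
        w = c1 * N * M * h ^ (-γ) + c2 * N * Njac * h ^ (-γ)} :=
    ⟨N0, M0, h0, 1/2, hN0, hM0, hh0, by norm_num, by norm_num, le_of_eq e1,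
      le_of_eq e2, rfl⟩
  constructor
  · -- lower bound
    apply le_csInf ⟨_, hfeas⟩
    rintro w ⟨N, M, h, κ, hN, hM, hh, hκ0, hκ1, hcon1, hcon2, rfl⟩
    have hA : (0:ℝ) < (TOL / Cα) ^ 2 := by positivity
    have h1 : Cdlis1 / N ≤ (TOL / Cα) ^ 2 := by
      calc Cdlis1 / N ≤ Cdlis1 / N + Cdlis2 / (N * M) :=
            le_add_of_nonneg_right (by positivity)
        _ ≤ (κ * TOL / Cα) ^ 2 := hcon1
        _ ≤ (TOL / Cα) ^ 2 := by
            have hκ2 : κ ^ 2 ≤ 1 := by nlinarith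
            have hexp : (κ * TOL / Cα) ^ 2 = κ ^ 2 * (TOL / Cα) ^ 2 := by ring
            nlinarith [hA, hκ2, hexp]
    have hNlb : Cdlis1 / (TOL / Cα) ^ 2 ≤ N := by
      rw [div_le_iff₀ hA]
      rw [div_le_iff₀ hN] at h1
      nlinarith [h1]
    have h2 : Cdlis4 / M ≤ TOL := by
      calc Cdlis4 / M ≤ Cdlis3 * h ^ η + Cdlis4 / M :=
            le_add_of_nonneg_left (by positivity)
        _ ≤ (1 - κ) * TOL := hcon2
        _ ≤ TOL := by nlinarith
    have hMlb : Cdlis4 / TOL ≤ M := by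
      rw [div_le_iff₀ hM] at h2
      rw [div_le_iff₀ hT]
      nlinarith [h2]
    have hhub : h ≤ (TOL / Cdlis3) ^ (1/η) := by
      have h3 : h ^ η ≤ TOL / Cdlis3 := by
        rw [le_div_iff₀ hC3]
        nlinarith [hcon2, div_pos hC4 hM, Real.rpow_pos_of_pos hh η]
      calc h = (h ^ η) ^ (1/η) := by
              rw [← Real.rpow_mul hh.le, mul_one_div, div_self hη', Real.rpow_one]
        _ ≤ (TOL / Cdlis3) ^ (1/η) :=
              Real.rpow_le_rpow (by positivity) h3 (by positivity)
    have hhlb : Cdlis3 ^ q * (TOL ^ q)⁻¹ ≤ h ^ (-γ) := by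
      have := Real.rpow_le_rpow_of_nonpos hh hhub (neg_nonpos.mpr hγ.le)
      calc Cdlis3 ^ q * (TOL ^ q)⁻¹ = ((TOL / Cdlis3) ^ (1/η)) ^ (-γ) := by
            rw [← Real.rpow_mul (by positivity),
              show 1/η * (-γ) = -q by rw [hq]; ring,
              Real.rpow_neg (by positivity), Real.div_rpow hT.le hC3.le, inv_div,
              div_eq_mul_inv]
        _ ≤ h ^ (-γ) := this
    have eqkey : clo * TOL ^ (-(3 + q)) =
        c1 * (Cdlis1 / (TOL / Cα) ^ 2) * (Cdlis4 / TOL) * (Cdlis3 ^ q * (TOL ^ q)⁻¹) := by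
      rw [t3, hclo]
      field_simp
    calc clo * TOL ^ (-(3 + q)) =
        c1 * (Cdlis1 / (TOL / Cα) ^ 2) * (Cdlis4 / TOL) * (Cdlis3 ^ q * (TOL ^ q)⁻¹) := eqkey
      _ ≤ c1 * N * M * h ^ (-γ) := by
          have hx : (0:ℝ) < Cdlis3 ^ q * (TOL ^ q)⁻¹ := by positivity
          gcongr <;> first | exact hNlb | exact hMlb | exact hhlb
      _ ≤ c1 * N * M * h ^ (-γ) + c2 * N * Njac * h ^ (-γ) := by
          have : (0:ℝ) < c2 * N * Njac * h ^ (-γ) := by positivity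
          linarith
  · -- upper bound
    have hbdd : BddBelow {w : ℝ | ∃ N M h κ : ℝ,
        0 < N ∧ 0 < M ∧ 0 < h ∧ 0 < κ ∧ κ < 1 ∧
        Cdlis1 / N + Cdlis2 / (N * M) ≤ (κ * TOL / Cα) ^ 2 ∧
        Cdlis3 * h ^ η + Cdlis4 / M ≤ (1 - κ) * TOL ∧
        w = c1 * N * M * h ^ (-γ) + c2 * N * Njac * h ^ (-γ)} := by
      refine ⟨0, ?_⟩
      rintro w ⟨N, M, h, κ, hN, hM, hh, _, _, _, _, rfl⟩
      positivity
    refine le_trans (csInf_le hbdd hfeas) ?_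
    -- bound the feasible work
    have hub : c1 * N0 * M0 * h0 ^ (-γ) + c2 * N0 * Njac * h0 ^ (-γ) ≤
        Chi * TOL ^ (-(3 + q)) := by
      have hN0ub : N0 ≤ (Cdlis1 + Cdlis2 / (4 * Cdlis4)) * (2 * Cα) ^ 2 * (TOL ^ (2:ℕ))⁻¹ := by
        rw [hN0def, hM0def]
        have h1 : Cdlis2 / (4 * Cdlis4 / TOL) ≤ Cdlis2 / (4 * Cdlis4) := by
          apply div_le_div_of_nonneg_left hC2.le (by positivity)
          rw [le_div_iff₀ hT]
          nlinarith
        have h2 : (2 * Cα / TOL) ^ 2 = (2 * Cα) ^ 2 * (TOL ^ (2:ℕ))⁻¹ := by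
          field_simp
        calc (Cdlis1 + Cdlis2 / (4 * Cdlis4 / TOL)) * (2 * Cα / TOL) ^ 2
            ≤ (Cdlis1 + Cdlis2 / (4 * Cdlis4)) * (2 * Cα / TOL) ^ 2 := by
              gcongr
          _ = (Cdlis1 + Cdlis2 / (4 * Cdlis4)) * (2 * Cα) ^ 2 * (TOL ^ (2:ℕ))⁻¹ := by
              rw [h2]; ring
      have hMc : c1 * M0 + c2 * Njac ≤ (c1 * (4 * Cdlis4) + c2 * Njac) * TOL⁻¹ := by
        rw [hM0def]
        have hTinv : (1:ℝ) ≤ TOL⁻¹ := by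
          rw [← one_div, le_div_iff₀ hT]
          linarith
        have h4 : c2 * Njac ≤ c2 * Njac * TOL⁻¹ :=
          le_mul_of_one_le_right (by positivity) hTinv
        have h3 : c1 * (4 * Cdlis4 / TOL) = c1 * (4 * Cdlis4) * TOL⁻¹ := by ring
        rw [h3]
        nlinarith [h4]
      have hrw : c1 * N0 * M0 * h0 ^ (-γ) + c2 * N0 * Njac * h0 ^ (-γ) =
          (c1 * M0 + c2 * Njac) * N0 * h0 ^ (-γ) := by ring
      rw [hrw, hh0γ]
      calc (c1 * M0 + c2 * Njac) * N0 * ((4 * Cdlis3) ^ q * (TOL ^ q)⁻¹) ≤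
          ((c1 * (4 * Cdlis4) + c2 * Njac) * TOL⁻¹) *
            ((Cdlis1 + Cdlis2 / (4 * Cdlis4)) * (2 * Cα) ^ 2 * (TOL ^ (2:ℕ))⁻¹) *
            ((4 * Cdlis3) ^ q * (TOL ^ q)⁻¹) := by
            have hx : (0:ℝ) < (4 * Cdlis3) ^ q * (TOL ^ q)⁻¹ := by positivity
            gcongr <;> first | exact hMc | exact hN0ub | positivity
        _ = Chi * TOL ^ (-(3 + q)) := by
            rw [t3, hChi]
            ring
    calc c1 * N0 * M0 * h0 ^ (-γ) + c2 * N0 * Njac * h0 ^ (-γ) ≤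
        Chi * TOL ^ (-(3 + q)) := hub
      _ ≤ max clo Chi * TOL ^ (-(3 + q)) :=
          mul_le_mul_of_nonneg_right (le_max_right _ _) (by positivity)
end
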